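/- Let k be a positive integer. Consider a 2-coloured complete graph whose vertex set is partitioned into sets R and B, each of size at least 2^{5k}, such that R contains no blue copy of K_k and B contains no red copy of K_k. Then there exists a (k,k)-join whose red part is contained in R and whose blue part is contained in B. -/

import Mathlib

open Finset

/-- There is a copy (subgraph embedding) of `H` in `G` whose image lies in `A`. -/
def SimpleGraph.CopyIn {W V : Type*} (H : SimpleGraph W) (G : SimpleGraph V) (A : Set V) :
    Prop :=
  ∃ f : W → V, Function.Injective f ∧ (∀ a, f a ∈ A) ∧
    ∀ ⦃a b⦄, H.Adj a b → G.Adj (f a) (f b)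

/-- There is a copy of `H` in `G`. -/
def SimpleGraph.ContainsCopy {W V : Type*} (H : SimpleGraph W) (G : SimpleGraph V) : Prop :=
  H.CopyIn G Set.univ

/-- The disjoint union of `n` copies of `H`, denoted `nH` in the paper. -/
def SimpleGraph.nCopies {W : Type*} (n : ℕ) (H : SimpleGraph W) : SimpleGraph (Fin n × W) where
  Adj x y := x.1 = y.1 ∧ H.Adj x.2 y.2
  symm := ⟨fun x y h => ⟨h.1.symm, h.2.symm⟩⟩
  loopless := ⟨fun x h => H.loopless.1 x.2 h.2⟩

/-- `N` is Ramsey for `H`: every red/blue colouring of the edges of `K_N` (encoded by its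
red graph `R`, the blue graph being `Rᶜ`) contains a monochromatic copy of `H`. -/
def SimpleGraph.RamseyProp {W : Type*} (H : SimpleGraph W) (N : ℕ) : Prop :=
  ∀ R : SimpleGraph (Fin N), H.ContainsCopy R ∨ H.ContainsCopy Rᶜ

/-- The Ramsey number `r(H)`. -/
noncomputable def SimpleGraph.ramsey {W : Type*} (H : SimpleGraph W) : ℕ :=
  sInf {N | H.RamseyProp N}

/-- `I` is an independent set of `G`. -/
def SimpleGraph.IsIndep {V : Type*} (G : SimpleGraph V) (I : Set V) : Prop :=
  I.Pairwise fun a b => ¬ G.Adj a b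

/-- The independence number `α(G)`. -/
noncomputable def SimpleGraph.indepNumber {V : Type*} (G : SimpleGraph V) : ℕ :=
  sSup {n | ∃ I : Finset V, G.IsIndep ↑I ∧ I.card = n}

/-- `I` is an independent set of `G`, maximal with respect to inclusion. -/
def SimpleGraph.IsMaximalIndep {V : Type*} (G : SimpleGraph V) (I : Set V) : Prop :=
  G.IsIndep I ∧ ∀ J : Set V, G.IsIndep J → I ⊆ J → J = I

/-- `R` contains a copy of some member of the family `𝒟(G)` of graphs obtained from `G`
by removing a maximal independent set. -/
def SimpleGraph.ContainsCopyOfD {V U : Type*} (G : SimpleGraph V) (R : SimpleGraph U) : Prop :=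
  ∃ I : Set V, G.IsMaximalIndep I ∧ (G.induce Iᶜ).ContainsCopy R

/-- `R` contains a copy of some connected component of `H`, i.e. of a member of `𝒞(H)`. -/
def SimpleGraph.ContainsCopyOfComp {V U : Type*} (H : SimpleGraph V) (R : SimpleGraph U) :
    Prop :=
  ∃ c : H.ConnectedComponent, (H.induce c.supp).ContainsCopy R

/-- `R` contains a copy of some member of the family `𝒟_c(H)`: graphs obtained by removing a
maximal independent set of `H` and taking a connected component of the remainder. -/
def SimpleGraph.ContainsCopyOfDc {V U : Type*} (H : SimpleGraph V) (R : SimpleGraph U) : Prop :=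
  ∃ I : Set V, H.IsMaximalIndep I ∧
    ∃ c : (H.induce Iᶜ).ConnectedComponent, ((H.induce Iᶜ).induce c.supp).ContainsCopy R

/-- `R` contains a copy of some member of the family `𝒟'_c(H)`: graphs obtained by removing an
independent set of `H` of maximum size `α(H)` and taking a connected component of the
remainder. -/
def SimpleGraph.ContainsCopyOfDc' {V U : Type*} (H : SimpleGraph V) (R : SimpleGraph U) : Prop :=
  ∃ I : Set V, H.IsIndep I ∧ I.ncard = H.indepNumber ∧
    ∃ c : (H.induce Iᶜ).ConnectedComponent, ((H.induce Iᶜ).induce c.supp).ContainsCopy R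

/-- The asymmetric Ramsey number `r(G, H)`. -/
noncomputable def SimpleGraph.ramsey2 {V W : Type*} (G : SimpleGraph V) (H : SimpleGraph W) :
    ℕ :=
  sInf {N | ∀ R : SimpleGraph (Fin N), G.ContainsCopy R ∨ H.ContainsCopy Rᶜ}

/-- The Ramsey number `r(𝒟(G), H)`. -/
noncomputable def SimpleGraph.ramseyDFam {V W : Type*} (G : SimpleGraph V)
    (H : SimpleGraph W) : ℕ :=
  sInf {N | ∀ R : SimpleGraph (Fin N), G.ContainsCopyOfD R ∨ H.ContainsCopy Rᶜ}

/-- The Ramsey number `r(𝒟(G), 𝒞(H))`. -/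
noncomputable def SimpleGraph.ramseyDCFam {V W : Type*} (G : SimpleGraph V)
    (H : SimpleGraph W) : ℕ :=
  sInf {N | ∀ R : SimpleGraph (Fin N), G.ContainsCopyOfD R ∨ H.ContainsCopyOfComp Rᶜ}

/-- The Ramsey number `r(𝒟_c(H), 𝒟(H))`. -/
noncomputable def SimpleGraph.ramseyDcD {V : Type*} (H : SimpleGraph V) : ℕ :=
  sInf {N | ∀ R : SimpleGraph (Fin N), H.ContainsCopyOfDc R ∨ H.ContainsCopyOfD Rᶜ}

/-- The Ramsey number `r(𝒟'_c(H), 𝒟(H))`. -/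
noncomputable def SimpleGraph.ramseyDc'D {V : Type*} (H : SimpleGraph V) : ℕ :=
  sInf {N | ∀ R : SimpleGraph (Fin N), H.ContainsCopyOfDc' R ∨ H.ContainsCopyOfD Rᶜ}

/-- An `H`-tie in the colouring with red graph `Red`: a set of `2|H| - α(H)` vertices
containing both a red and a blue copy of `H`. -/
def SimpleGraph.IsTie {V : Type*} {k : ℕ} (H : SimpleGraph (Fin k)) (Red : SimpleGraph V)
    (S : Finset V) : Prop :=
  S.card = 2 * k - H.indepNumber ∧ H.CopyIn Red ↑S ∧ H.CopyIn Redᶜ ↑S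

/-- A `K_k`-tiling of `G`: pairwise disjoint `k`-cliques covering all but at most
`|G| mod k` vertices. -/
def SimpleGraph.HasKkTiling {V : Type*} [Fintype V] [DecidableEq V] (G : SimpleGraph V)
    (k : ℕ) : Prop :=
  ∃ T : Finset (Finset V), (∀ S ∈ T, G.IsNClique k S) ∧
    (T : Set (Finset V)).PairwiseDisjoint id ∧
    Fintype.card V - (T.biUnion id).card ≤ Fintype.card V % k

/-- A perfect `K_k`-tiling of `G`: pairwise disjoint `k`-cliques covering all vertices. -/
def SimpleGraph.HasPerfectKkTiling {V : Type*} [Fintype V] [DecidableEq V] (G : SimpleGraph V)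
    (k : ℕ) : Prop :=
  ∃ T : Finset (Finset V), (∀ S ∈ T, G.IsNClique k S) ∧
    (T : Set (Finset V)).PairwiseDisjoint id ∧ T.biUnion id = Finset.univ

/-- `a` and `b` are joined by an edge of colour `c` (where `true` is red and `false` is blue)
in the colouring with red graph `Red`. -/
def SimpleGraph.colorAdj {V : Type*} (Red : SimpleGraph V) (c : Bool) (a b : V) : Prop :=
  if c then Red.Adj a b else Redᶜ.Adj a b

lemma my_ramsey_aux {V : Type*} [DecidableEq V] (Red : SimpleGraph V) :
    ∀ n a b (S : Finset V), a + b ≤ n → 2 ^ (a + b) ≤ S.card →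
    (∃ T ⊆ S, Red.IsNClique a T) ∨ (∃ T ⊆ S, Redᶜ.IsNClique b T) := by
  classical
  intro n
  induction n with
  | zero =>
    intro a b S hab _
    have ha : a = 0 := by omega
    subst ha
    exact Or.inl ⟨∅, empty_subset _, by simp⟩
  | succ n ih =>
    intro a b S hab hS
    rcases Nat.eq_zero_or_pos a with ha | ha
    · subst ha; exact Or.inl ⟨∅, empty_subset _, by simp⟩
    rcases Nat.eq_zero_or_pos b with hb | hb
    · subst hb; exact Or.inr ⟨∅, empty_subset _, by simp⟩
    have hSpos : 0 < S.card := lt_of_lt_of_le (Nat.pow_pos (by norm_num)) hS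
    obtain ⟨v, hv⟩ : S.Nonempty := card_pos.mp hSpos
    set N := (S.erase v).filter (fun u => Red.Adj v u) with hN
    set M := (S.erase v).filter (fun u => ¬ Red.Adj v u) with hM
    have hNM : N.card + M.card = S.card - 1 := by
      rw [hN, hM, Finset.card_filter_add_card_filter_not, card_erase_of_mem hv]
    have key : 2 ^ (a - 1 + b) ≤ N.card ∨ 2 ^ (a + (b - 1)) ≤ M.card := by
      by_contra hcon
      push_neg at hcon
      obtain ⟨h1, h2⟩ := hcon
      have e1 : a - 1 + b = a + b - 1 := by omega
      have e2 : a + (b - 1) = a + b - 1 := by omega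
      rw [e1] at h1; rw [e2] at h2
      have e3 : 2 ^ (a + b) = 2 * 2 ^ (a + b - 1) := by
        rw [← pow_succ']; congr 1; omega
      rw [e3] at hS
      omega
    rcases key with hkey | hkey
    · rcases ih (a - 1) b N (by omega) hkey with ⟨T, hTN, hT⟩ | ⟨T, hTN, hT⟩
      · refine Or.inl ⟨insert v T, ?_, ?_, ?_⟩
        · exact insert_subset hv (hTN.trans ((filter_subset _ _).trans (erase_subset _ _)))
        · rw [Finset.coe_insert]
          refine hT.1.insert fun t ht _ => ?_
          exact (mem_filter.mp (hTN ht)).2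
        · have hvT : v ∉ T := fun h =>
            notMem_erase v S (filter_subset _ _ (hTN h))
          rw [card_insert_of_notMem hvT, hT.2]; omega
      · exact Or.inr ⟨T, hTN.trans ((filter_subset _ _).trans (erase_subset _ _)), hT⟩
    · rcases ih a (b - 1) M (by omega) hkey with ⟨T, hTM, hT⟩ | ⟨T, hTM, hT⟩
      · exact Or.inl ⟨T, hTM.trans ((filter_subset _ _).trans (erase_subset _ _)), hT⟩
      · refine Or.inr ⟨insert v T, ?_, ?_, ?_⟩
        · exact insert_subset hv (hTM.trans ((filter_subset _ _).trans (erase_subset _ _)))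
        · rw [Finset.coe_insert]
          refine hT.1.insert fun t ht _ => ?_
          have htm := mem_filter.mp (hTM ht)
          exact ⟨(Finset.ne_of_mem_erase htm.1).symm, htm.2⟩
        · have hvT : v ∉ T := fun h =>
            notMem_erase v S (filter_subset _ _ (hTM h))
          rw [card_insert_of_notMem hvT, hT.2]; omega

lemma my_halving {V : Type*} [DecidableEq V] (Red : SimpleGraph V) :
    ∀ (C R0 : Finset V), Disjoint C R0 →
    ∃ (R' : Finset V) (f : V → Bool), R' ⊆ R0 ∧ R0.card ≤ 2 ^ C.card * R'.card ∧
      ∀ c ∈ C, ∀ r ∈ R', (if f c then Red.Adj c r else ¬ Red.Adj c r) := by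
  classical
  intro C
  induction C using Finset.induction_on with
  | empty =>
    intro R0 _
    exact ⟨R0, fun _ => true, Subset.rfl, by simp, by simp⟩
  | @insert c C' hc ihC =>
    intro R0 hdisj
    obtain ⟨R', f, hsub, hbound, hcol⟩ := ihC R0 (hdisj.mono_left (subset_insert _ _))
    set P := R'.filter (fun r => Red.Adj c r) with hP
    set Q := R'.filter (fun r => ¬ Red.Adj c r) with hQ
    have hPQ : P.card + Q.card = R'.card := by
      rw [hP, hQ, Finset.card_filter_add_card_filter_not]
    have hcard : R'.card ≤ 2 * P.card ∨ R'.card ≤ 2 * Q.card := by omega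
    have hins : (insert c C').card = C'.card + 1 := card_insert_of_notMem hc
    rcases hcard with h | h
    · refine ⟨P, fun x => if x = c then true else f x, (filter_subset _ _).trans hsub, ?_, ?_⟩
      · rw [hins, pow_succ]
        calc R0.card ≤ 2 ^ C'.card * R'.card := hbound
        _ ≤ 2 ^ C'.card * (2 * P.card) := Nat.mul_le_mul_left _ h
        _ = 2 ^ C'.card * 2 * P.card := by ring
      · intro d hd r hr
        rcases Finset.mem_insert.mp hd with rfl | hd'
        · simpa using (mem_filter.mp hr).2
        · have hdc : d ≠ c := fun h' => hc (h' ▸ hd')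
          simpa [hdc] using hcol d hd' r (filter_subset _ _ hr)
    · refine ⟨Q, fun x => if x = c then false else f x, (filter_subset _ _).trans hsub, ?_, ?_⟩
      · rw [hins, pow_succ]
        calc R0.card ≤ 2 ^ C'.card * R'.card := hbound
        _ ≤ 2 ^ C'.card * (2 * Q.card) := Nat.mul_le_mul_left _ h
        _ = 2 ^ C'.card * 2 * Q.card := by ring
      · intro d hd r hr
        rcases Finset.mem_insert.mp hd with rfl | hd'
        · simpa using (mem_filter.mp hr).2
        · have hdc : d ≠ c := fun h' => hc (h' ▸ hd')
          simpa [hdc] using hcol d hd' r (filter_subset _ _ hr)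

/-- Lemma 2.2. Given a 2-coloured complete graph whose vertices are
partitioned into sets `R` and `B`, each of size at least `2^(5k)`, such that `R` has no blue
`K_k` and `B` has no red `K_k`, there is a `(k,k)`-join with red part in `R` and blue part
in `B`. -/
theorem exists_join {V : Type*} [Fintype V] [DecidableEq V] (k : ℕ) (hk : 0 < k)
    (Red : SimpleGraph V) (R B : Finset V) (hdisj : Disjoint R B)
    (hcover : R ∪ B = Finset.univ)
    (hR : 2 ^ (5 * k) ≤ R.card) (hB : 2 ^ (5 * k) ≤ B.card)
    (hRnoBlue : ¬ ∃ S : Finset V, S ⊆ R ∧ Redᶜ.IsNClique k S)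
    (hBnoRed : ¬ ∃ S : Finset V, S ⊆ B ∧ Red.IsNClique k S) :
    ∃ R' B' : Finset V, R' ⊆ R ∧ B' ⊆ B ∧ Red.IsNClique k R' ∧ Redᶜ.IsNClique k B' ∧
      ((∀ a ∈ R', ∀ b ∈ B', Red.Adj a b) ∨ (∀ a ∈ R', ∀ b ∈ B', Redᶜ.Adj a b)) := by
  classical
  -- Step 1: a blue clique C of size 2k-1 inside B
  have hBsize : 2 ^ (k + (2 * k - 1)) ≤ B.card := by
    refine le_trans (Nat.pow_le_pow_right (by norm_num) (by omega)) hB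
  obtain ⟨C, hCB, hC⟩ :=
    (my_ramsey_aux Red (k + (2 * k - 1)) k (2 * k - 1) B le_rfl hBsize).resolve_left
      (fun ⟨T, hT1, hT2⟩ => hBnoRed ⟨T, hT1, hT2⟩)
  -- Step 2: halving
  obtain ⟨R', f, hR'sub, hbound, hcross⟩ :=
    my_halving Red C R (hdisj.symm.mono_left hCB)
  have hCcard : C.card = 2 * k - 1 := hC.2
  -- Step 3: R' is big
  have hR'big : 2 ^ (k + k) ≤ R'.card := by
    have h1 : 2 ^ C.card * 2 ^ (k + k) ≤ 2 ^ (5 * k) := by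
      rw [← pow_add]
      exact Nat.pow_le_pow_right (by norm_num) (by omega)
    have h2 : 2 ^ C.card * 2 ^ (k + k) ≤ 2 ^ C.card * R'.card :=
      le_trans h1 (le_trans hR hbound)
    exact Nat.le_of_mul_le_mul_left h2 (Nat.pow_pos (by norm_num))
  -- Step 4: pigeonhole on colours
  have hpig : (C.filter (fun c => f c = true)).card + (C.filter (fun c => ¬ f c = true)).card
      = C.card := Finset.card_filter_add_card_filter_not _
  have hcol : ∃ col : Bool, k ≤ (C.filter (fun c => f c = col)).card := by
    rcases le_or_gt k (C.filter (fun c => f c = true)).card with h | h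
    · exact ⟨true, h⟩
    · refine ⟨false, ?_⟩
      have heq : (C.filter (fun c => ¬ f c = true)) = (C.filter (fun c => f c = false)) := by
        apply filter_congr; intro x _; simp
      rw [heq] at hpig
      omega
  obtain ⟨col, hcol⟩ := hcol
  obtain ⟨B', hB'sub, hB'card⟩ := Finset.exists_subset_card_eq hcol
  have hB'C : B' ⊆ C := hB'sub.trans (filter_subset _ _)
  have hB'B : B' ⊆ B := hB'C.trans hCB
  have hB'clique : Redᶜ.IsNClique k B' :=
    ⟨hC.1.subset (Finset.coe_subset.mpr hB'C), hB'card⟩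
  -- Step 5: red K_k in R'
  obtain ⟨R'', hR''sub, hR''⟩ :=
    (my_ramsey_aux Red (k + k) k k R' le_rfl hR'big).resolve_right
      (fun ⟨T, hT1, hT2⟩ => hRnoBlue ⟨T, hT1.trans hR'sub, hT2⟩)
  refine ⟨R'', B', hR''sub.trans hR'sub, hB'B, hR'', hB'clique, ?_⟩
  have hcross' : ∀ a ∈ R'', ∀ b ∈ B',
      (if f b then Red.Adj b a else ¬ Red.Adj b a) := by
    intro a ha b hb
    exact hcross b (hB'C hb) a (hR''sub ha)
  cases col with
  | true =>
    left
    intro a ha b hb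
    have hfb : f b = true := (mem_filter.mp (hB'sub hb)).2
    have := hcross' a ha b hb
    rw [hfb] at this
    simp only [if_true] at this
    exact this.symm
  | false =>
    right
    intro a ha b hb
    have hfb : f b = false := (mem_filter.mp (hB'sub hb)).2
    have := hcross' a ha b hb
    rw [hfb] at this
    simp only [Bool.false_eq_true, if_false] at this
    have hne : a ≠ b := by
      intro h
      exact Finset.disjoint_left.mp hdisj (hR'sub (hR''sub ha)) (h ▸ hB'B hb)
    exact ⟨hne, fun hadj => this hadj.symm⟩
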